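/- Let P be a probability measure on ℝ^p × ℝ^q with finite second moments whose covariance matrices Σ_X and Σ_Y are positive definite and whose Pillai trace satisfies Φ(P) = tr(Σ_X^{-1} Σ_XY Σ_Y^{-1} Σ_YX) > 0, and fix o = (x, y) ∈ ℝ^p × ℝ^q. With P_ε = (1−ε)P + ε δ_o and Ψ(Q) = √Φ(Q), the map ε ↦ Ψ(P_ε) is differentiable from the right at ε = 0 with right derivative equal to (2√Φ(P))^{-1} · [ −(x−μ_X)ᵀ Σ_X^{-1} Σ_XY Σ_Y^{-1} Σ_YX Σ_X^{-1} (x−μ_X) − (y−μ_Y)ᵀ Σ_Y^{-1} Σ_YX Σ_X^{-1} Σ_XY Σ_Y^{-1} (y−μ_Y) + 2 (y−μ_Y)ᵀ Σ_Y^{-1} Σ_YX Σ_X^{-1} (x−μ_X) ]. -/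

import Mathlib

open Matrix MeasureTheory

noncomputable section

/-- Squared Frobenius norm of a real matrix: `‖M‖_F² = tr (M Mᵀ)`. -/
def frobSq {m n : Type*} [Fintype m] [Fintype n] (M : Matrix m n ℝ) : ℝ :=
  Matrix.trace (M * Mᵀ)

/-- Frobenius norm of a real matrix. -/
def frobNorm {m n : Type*} [Fintype m] [Fintype n] (M : Matrix m n ℝ) : ℝ :=
  Real.sqrt (frobSq M)

open Classical in
/-- `A^{-1/2}`: the inverse of the unique positive definite square root of a positive
definite matrix `A` (junk value `0` if `A` is not positive definite). -/
def invSqrt {n : Type*} [Fintype n] [DecidableEq n] (A : Matrix n n ℝ) : Matrix n n ℝ :=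
  if h : A.PosDef then
    ((h.posSemidef.isHermitian.eigenvectorUnitary : Matrix n n ℝ) *
      diagonal ((↑) ∘ (Real.sqrt ∘ h.posSemidef.isHermitian.eigenvalues)) *
      (star h.posSemidef.isHermitian.eigenvectorUnitary : Matrix n n ℝ))⁻¹ else 0

variable {p q : ℕ}

/-- Mean vector `μ_X` of the first component under `P`. -/
def meanX (P : Measure ((Fin p → ℝ) × (Fin q → ℝ))) : Fin p → ℝ :=
  fun i => ∫ o, o.1 i ∂P

/-- Mean vector `μ_Y` of the second component under `P`. -/
def meanY (P : Measure ((Fin p → ℝ) × (Fin q → ℝ))) : Fin q → ℝ :=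
  fun j => ∫ o, o.2 j ∂P

/-- Covariance matrix `Σ_X` of the first component under `P`, defined entrywise. -/
def covX (P : Measure ((Fin p → ℝ) × (Fin q → ℝ))) : Matrix (Fin p) (Fin p) ℝ :=
  Matrix.of fun i i' => ∫ o, (o.1 i - meanX P i) * (o.1 i' - meanX P i') ∂P

/-- Covariance matrix `Σ_Y` of the second component under `P`, defined entrywise. -/
def covY (P : Measure ((Fin p → ℝ) × (Fin q → ℝ))) : Matrix (Fin q) (Fin q) ℝ :=
  Matrix.of fun j j' => ∫ o, (o.2 j - meanY P j) * (o.2 j' - meanY P j') ∂P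

/-- Cross-covariance matrix `Σ_XY` under `P`, defined entrywise. -/
def covXY (P : Measure ((Fin p → ℝ) × (Fin q → ℝ))) : Matrix (Fin p) (Fin q) ℝ :=
  Matrix.of fun i j => ∫ o, (o.1 i - meanX P i) * (o.2 j - meanY P j) ∂P

/-- The Pillai trace `Φ(P) = tr (Σ_X⁻¹ Σ_XY Σ_Y⁻¹ Σ_YX)` of `P`. -/
def pillai (P : Measure ((Fin p → ℝ) × (Fin q → ℝ))) : ℝ :=
  Matrix.trace ((covX P)⁻¹ * covXY P * (covY P)⁻¹ * (covXY P)ᵀ)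

/-- The Dirac contamination `P_ε = (1−ε) P + ε δ_o`. -/
def pert (P : Measure ((Fin p → ℝ) × (Fin q → ℝ))) (o : (Fin p → ℝ) × (Fin q → ℝ)) (ε : ℝ) :
    Measure ((Fin p → ℝ) × (Fin q → ℝ)) :=
  ENNReal.ofReal (1 - ε) • P + ENNReal.ofReal ε • Measure.dirac o


namespace RPCG

open Finset

section MatrixAux

variable {n m k l : Type*} [Fintype n] [Fintype m] [Fintype k] [Fintype l]

set_option linter.unusedSectionVars false

lemma trace_mul4 (W : Matrix n m ℝ) (X : Matrix m k ℝ) (Y : Matrix k l ℝ) (Z : Matrix l n ℝ) :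
    Matrix.trace (W * X * Y * Z) = ∑ i, ∑ c, ∑ b, ∑ a, W i a * X a b * Y b c * Z c i := by
  simp only [Matrix.trace, Matrix.mul_apply, Matrix.diag, Finset.sum_mul, Finset.mul_sum]

lemma hasDerivAt_trace_mul4 {W : ℝ → Matrix n m ℝ} {X : ℝ → Matrix m k ℝ}
    {Y : ℝ → Matrix k l ℝ} {Z : ℝ → Matrix l n ℝ}
    {W' : Matrix n m ℝ} {X' : Matrix m k ℝ} {Y' : Matrix k l ℝ} {Z' : Matrix l n ℝ} {t : ℝ}
    (hW : ∀ i j, HasDerivAt (fun ε => W ε i j) (W' i j) t)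
    (hX : ∀ i j, HasDerivAt (fun ε => X ε i j) (X' i j) t)
    (hY : ∀ i j, HasDerivAt (fun ε => Y ε i j) (Y' i j) t)
    (hZ : ∀ i j, HasDerivAt (fun ε => Z ε i j) (Z' i j) t) :
    HasDerivAt (fun ε => Matrix.trace (W ε * X ε * Y ε * Z ε))
      (Matrix.trace (W' * X t * Y t * Z t) + Matrix.trace (W t * X' * Y t * Z t)
        + Matrix.trace (W t * X t * Y' * Z t) + Matrix.trace (W t * X t * Y t * Z')) t := by
  have key : ∀ ε, Matrix.trace (W ε * X ε * Y ε * Z ε)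
      = ∑ i, ∑ c, ∑ b, ∑ a, W ε i a * X ε a b * Y ε b c * Z ε c i := fun ε => trace_mul4 _ _ _ _
  simp only [key, trace_mul4, ← Finset.sum_add_distrib]
  apply HasDerivAt.fun_sum; intro i _
  apply HasDerivAt.fun_sum; intro c _
  apply HasDerivAt.fun_sum; intro b _
  apply HasDerivAt.fun_sum; intro a _
  have h := (((hW i a).mul (hX a b)).mul (hY b c)).mul (hZ c i)
  refine h.congr_deriv ?_
  simp only [Pi.mul_apply]
  ring

lemma trace_vecMulVec_mul (a : n → ℝ) (b : m → ℝ) (M : Matrix m n ℝ) :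
    Matrix.trace (Matrix.vecMulVec a b * M) = b ⬝ᵥ (M.mulVec a) := by
  simp only [Matrix.trace, Matrix.mul_apply, Matrix.diag, Matrix.vecMulVec_apply,
    dotProduct, Matrix.mulVec, Finset.mul_sum, Finset.sum_mul]
  rw [Finset.sum_comm]
  exact Finset.sum_congr rfl fun j _ => Finset.sum_congr rfl fun i _ => by ring

lemma vecMulVec_mul_mul_vecMulVec (a : n → ℝ) (b : m → ℝ) (M : Matrix m k ℝ) (c : k → ℝ)
    (d : l → ℝ) :
    Matrix.vecMulVec a b * M * Matrix.vecMulVec c d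
      = (b ⬝ᵥ M.mulVec c) • Matrix.vecMulVec a d := by
  ext i j
  simp only [Matrix.mul_apply, Matrix.vecMulVec_apply, Matrix.smul_apply, dotProduct,
    Matrix.mulVec, smul_eq_mul, Finset.sum_mul, Finset.mul_sum]
  rw [Finset.sum_comm]
  exact Finset.sum_congr rfl fun x _ => Finset.sum_congr rfl fun y _ => by ring

lemma dot_mulVec_symm (M : Matrix n m ℝ) (a : n → ℝ) (b : m → ℝ) :
    a ⬝ᵥ M.mulVec b = b ⬝ᵥ Mᵀ.mulVec a := by
  simp only [dotProduct, Matrix.mulVec, Matrix.transpose_apply, dotProduct,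
    Finset.mul_sum]
  rw [Finset.sum_comm]
  exact Finset.sum_congr rfl fun j _ => Finset.sum_congr rfl fun i _ => by ring

lemma vecMulVec_transpose (a : n → ℝ) (b : m → ℝ) :
    (Matrix.vecMulVec a b)ᵀ = Matrix.vecMulVec b a := by
  ext i j
  simp [Matrix.vecMulVec_apply, mul_comm]

lemma sm_right_inv [DecidableEq n] (A : Matrix n n ℝ) (hA : IsUnit A.det)
    (a b : n → ℝ) {ε : ℝ} (hden : 1 + ε * (b ⬝ᵥ A⁻¹.mulVec a) ≠ 0) :
    (A + ε • Matrix.vecMulVec a b) *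
      (A⁻¹ - (ε / (1 + ε * (b ⬝ᵥ A⁻¹.mulVec a))) • (A⁻¹ * Matrix.vecMulVec a b * A⁻¹)) = 1 := by
  set α := b ⬝ᵥ A⁻¹.mulVec a with hα
  set c := ε / (1 + ε * α) with hc
  set V := Matrix.vecMulVec a b with hV
  have h1 : A * A⁻¹ = 1 := Matrix.mul_nonsing_inv A hA
  have e1 : A * (A⁻¹ * V * A⁻¹) = V * A⁻¹ := by
    rw [← Matrix.mul_assoc, ← Matrix.mul_assoc, h1, Matrix.one_mul]
  have hVAV : V * A⁻¹ * V = α • V := by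
    rw [hV, vecMulVec_mul_mul_vecMulVec, hα]
  have e2 : V * (A⁻¹ * V * A⁻¹) = α • (V * A⁻¹) := by
    rw [← Matrix.mul_assoc, ← Matrix.mul_assoc, hVAV, Matrix.smul_mul]
  have hc0 : ε - c - ε * c * α = 0 := by
    rw [hc]; field_simp; ring
  have expand : (A + ε • V) * (A⁻¹ - c • (A⁻¹ * V * A⁻¹))
      = 1 + (ε - c - ε * c * α) • (V * A⁻¹) := by
    simp only [Matrix.add_mul, Matrix.mul_sub, Matrix.mul_smul, Matrix.smul_mul, h1, e1, e2,
      smul_smul]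
    module
  rw [expand, hc0, zero_smul, add_zero]

end MatrixAux

section MeasAux

variable {p q : ℕ}

local notation "W" => ((Fin p → ℝ) × (Fin q → ℝ))

lemma integral_pert (P : Measure W) [IsProbabilityMeasure P] (o : W) {ε : ℝ}
    (h0 : (0:ℝ) ≤ ε) (h1 : ε ≤ 1) (f : W → ℝ) (hfc : Continuous f) (hf : Integrable f P) :
    ∫ w, f w ∂(pert P o ε) = (1 - ε) * ∫ w, f w ∂P + ε * f o := by
  have hd : Integrable f (Measure.dirac o) :=
    ⟨hfc.aestronglyMeasurable, by
      rw [HasFiniteIntegral, MeasureTheory.lintegral_dirac]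
      exact ENNReal.coe_lt_top⟩
  rw [pert, integral_add_measure (hf.smul_measure ENNReal.ofReal_ne_top)
      (hd.smul_measure ENNReal.ofReal_ne_top),
    integral_smul_measure, integral_smul_measure, integral_dirac,
    ENNReal.toReal_ofReal (by linarith), ENNReal.toReal_ofReal h0, smul_eq_mul, smul_eq_mul]

lemma int_base {P : Measure W} [IsProbabilityMeasure P]
    (hX2 : Integrable (fun w : W => ‖w.1‖ ^ 2) P)
    (hY2 : Integrable (fun w : W => ‖w.2‖ ^ 2) P) :
    Integrable (fun w : W => 1 + (‖w.1‖ ^ 2 + ‖w.2‖ ^ 2)) P :=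
  (integrable_const 1).add (hX2.add hY2)

lemma max_le_base (w : W) : max ‖w.1‖ ‖w.2‖ ≤ 1 + (‖w.1‖ ^ 2 + ‖w.2‖ ^ 2) := by
  rcases max_cases ‖w.1‖ ‖w.2‖ with ⟨h, _⟩ | ⟨h, _⟩ <;> rw [h] <;>
    nlinarith [sq_nonneg (‖w.1‖ - 1), sq_nonneg (‖w.2‖ - 1), norm_nonneg w.1, norm_nonneg w.2,
      sq_nonneg ‖w.1‖, sq_nonneg ‖w.2‖]

lemma int_mom1 {P : Measure W} [IsProbabilityMeasure P]
    (hX2 : Integrable (fun w : W => ‖w.1‖ ^ 2) P)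
    (hY2 : Integrable (fun w : W => ‖w.2‖ ^ 2) P)
    (f : W → ℝ) (hfc : Continuous f)
    (hb : ∀ w, |f w| ≤ max ‖w.1‖ ‖w.2‖) : Integrable f P := by
  refine (int_base hX2 hY2).mono' hfc.aestronglyMeasurable
    (Filter.Eventually.of_forall fun w => ?_)
  rw [Real.norm_eq_abs]
  exact (hb w).trans (max_le_base w)

lemma int_mom2 {P : Measure W} [IsProbabilityMeasure P]
    (hX2 : Integrable (fun w : W => ‖w.1‖ ^ 2) P)
    (hY2 : Integrable (fun w : W => ‖w.2‖ ^ 2) P)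
    (f g : W → ℝ) (hfc : Continuous f) (hgc : Continuous g)
    (hbf : ∀ w, |f w| ≤ max ‖w.1‖ ‖w.2‖) (hbg : ∀ w, |g w| ≤ max ‖w.1‖ ‖w.2‖) (a b : ℝ) :
    Integrable (fun w => (f w - a) * (g w - b)) P := by
  have hbase : Integrable (fun w : W =>
      (1 + |a|) * (1 + |b|) * (1 + (‖w.1‖ ^ 2 + ‖w.2‖ ^ 2))) P :=
    (int_base hX2 hY2).const_mul _
  refine hbase.mono'
    (((hfc.sub continuous_const).mul (hgc.sub continuous_const)).aestronglyMeasurable)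
    (Filter.Eventually.of_forall fun w => ?_)
  rw [Real.norm_eq_abs, abs_mul]
  set M := max ‖w.1‖ ‖w.2‖ with hM
  have hM0 : 0 ≤ M := le_max_of_le_left (norm_nonneg _)
  have h1 : |f w - a| ≤ M + |a| := (abs_sub _ _).trans (by gcongr; exact hbf w)
  have h2 : |g w - b| ≤ M + |b| := (abs_sub _ _).trans (by gcongr; exact hbg w)
  have h3 : M ^ 2 ≤ ‖w.1‖ ^ 2 + ‖w.2‖ ^ 2 := by
    rcases max_cases ‖w.1‖ ‖w.2‖ with ⟨h, _⟩ | ⟨h, _⟩ <;> rw [hM, h] <;>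
      nlinarith [sq_nonneg ‖w.1‖, sq_nonneg ‖w.2‖]
  calc |f w - a| * |g w - b| ≤ (M + |a|) * (M + |b|) :=
        mul_le_mul h1 h2 (abs_nonneg _) (by positivity)
    _ ≤ (1 + |a|) * (1 + |b|) * (1 + M ^ 2) := by
        nlinarith [abs_nonneg a, abs_nonneg b, hM0, sq_nonneg (M - 1),
          mul_nonneg (abs_nonneg a) (sq_nonneg (M - 1)),
          mul_nonneg (abs_nonneg b) (sq_nonneg (M - 1)),
          mul_nonneg (mul_nonneg (abs_nonneg a) (abs_nonneg b)) (sq_nonneg M),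
          mul_nonneg (abs_nonneg a) hM0, mul_nonneg (abs_nonneg b) hM0]
    _ ≤ (1 + |a|) * (1 + |b|) * (1 + (‖w.1‖ ^ 2 + ‖w.2‖ ^ 2)) := by
        have h4 : (0:ℝ) ≤ (1 + |a|) * (1 + |b|) := by positivity
        nlinarith

lemma cov_pert_entry {P : Measure W} [IsProbabilityMeasure P]
    (hX2 : Integrable (fun w : W => ‖w.1‖ ^ 2) P)
    (hY2 : Integrable (fun w : W => ‖w.2‖ ^ 2) P)
    (o : W) {ε : ℝ} (h0 : (0:ℝ) ≤ ε) (h1 : ε ≤ 1)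
    (f g : W → ℝ) (hfc : Continuous f) (hgc : Continuous g)
    (hbf : ∀ w, |f w| ≤ max ‖w.1‖ ‖w.2‖) (hbg : ∀ w, |g w| ≤ max ‖w.1‖ ‖w.2‖) :
    ∫ w, (f w - ∫ w', f w' ∂(pert P o ε)) * (g w - ∫ w', g w' ∂(pert P o ε)) ∂(pert P o ε)
      = (1 - ε) * ∫ w, (f w - ∫ w', f w' ∂P) * (g w - ∫ w', g w' ∂P) ∂P
        + (ε * (1 - ε)) * ((f o - ∫ w', f w' ∂P) * (g o - ∫ w', g w' ∂P)) := by
  set μf := ∫ w', f w' ∂P with hμf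
  set μg := ∫ w', g w' ∂P with hμg
  have hif : Integrable f P := int_mom1 hX2 hY2 f hfc hbf
  have hig : Integrable g P := int_mom1 hX2 hY2 g hgc hbg
  have hmf : ∫ w', f w' ∂(pert P o ε) = μf + ε * (f o - μf) := by
    rw [integral_pert P o h0 h1 f hfc hif]; ring
  have hmg : ∫ w', g w' ∂(pert P o ε) = μg + ε * (g o - μg) := by
    rw [integral_pert P o h0 h1 g hgc hig]; ring
  set uf := f o - μf
  set ug := g o - μg
  rw [hmf, hmg]
  have hF : Integrable (fun w => (f w - (μf + ε * uf)) * (g w - (μg + ε * ug))) P :=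
    int_mom2 hX2 hY2 f g hfc hgc hbf hbg _ _
  rw [integral_pert P o h0 h1 (fun w => (f w - (μf + ε * uf)) * (g w - (μg + ε * ug))) ((hfc.sub continuous_const).mul (hgc.sub continuous_const)) hF]
  have hfg : Integrable (fun w => (f w - μf) * (g w - μg)) P :=
    int_mom2 hX2 hY2 f g hfc hgc hbf hbg _ _
  have hfc' : Integrable (fun w => f w - μf) P := hif.sub (integrable_const _)
  have hgc' : Integrable (fun w => g w - μg) P := hig.sub (integrable_const _)
  have hf0 : ∫ w, (f w - μf) ∂P = 0 := by
    rw [integral_sub hif (integrable_const _), integral_const]; simp [hμf]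
  have hg0 : ∫ w, (g w - μg) ∂P = 0 := by
    rw [integral_sub hig (integrable_const _), integral_const]; simp [hμg]
  have hI : ∫ w, (f w - (μf + ε * uf)) * (g w - (μg + ε * ug)) ∂P
      = (∫ w, (f w - μf) * (g w - μg) ∂P) + (ε * uf) * (ε * ug) := by
    have e1 : ∀ w : W, (f w - (μf + ε * uf)) * (g w - (μg + ε * ug))
        = (f w - μf) * (g w - μg) - (ε * ug) * (f w - μf) - (ε * uf) * (g w - μg)
          + (ε * uf) * (ε * ug) := fun w => by ring
    simp_rw [e1]
    rw [integral_add, integral_sub, integral_sub, integral_const_mul, integral_const_mul, hf0,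
      hg0, integral_const]
    · simp
    · exact hfg
    · exact hfc'.const_mul _
    · exact hfg.sub (hfc'.const_mul _)
    · exact hgc'.const_mul _
    · exact (hfg.sub (hfc'.const_mul _)).sub (hgc'.const_mul _)
    · exact integrable_const _
  rw [hI]
  ring

end MeasAux

end RPCG

/-- Canonical gradient of the root-Pillai trace `Ψ = √Φ` (equation (5) of the paper): if
`Φ(P) > 0`, then under Dirac contamination `P_ε = (1−ε)P + εδ_o` the map `ε ↦ Ψ(P_ε)` has
right derivative at `ε = 0` equal to the canonical gradient of `Φ` divided by `2√Φ(P)`. -/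
theorem root_pillai_canonical_gradient (p q : ℕ)
    (P : Measure ((Fin p → ℝ) × (Fin q → ℝ))) [IsProbabilityMeasure P]
    (hX2 : Integrable (fun o => ‖o.1‖ ^ 2) P) (hY2 : Integrable (fun o => ‖o.2‖ ^ 2) P)
    (hX : (covX P).PosDef) (hY : (covY P).PosDef)
    (hΦ : 0 < pillai P)
    (o : (Fin p → ℝ) × (Fin q → ℝ)) :
    HasDerivWithinAt (fun ε => Real.sqrt (pillai (pert P o ε)))
      ((2 * Real.sqrt (pillai P))⁻¹ *
        (-((fun i => o.1 i - meanX P i) ⬝ᵥ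
              (((covX P)⁻¹ * covXY P * (covY P)⁻¹ * (covXY P)ᵀ * (covX P)⁻¹).mulVec
                (fun i => o.1 i - meanX P i)))
          - ((fun j => o.2 j - meanY P j) ⬝ᵥ
              (((covY P)⁻¹ * (covXY P)ᵀ * (covX P)⁻¹ * covXY P * (covY P)⁻¹).mulVec
                (fun j => o.2 j - meanY P j)))
          + 2 * ((fun j => o.2 j - meanY P j) ⬝ᵥ
              (((covY P)⁻¹ * (covXY P)ᵀ * (covX P)⁻¹).mulVec
                (fun i => o.1 i - meanX P i)))))
      (Set.Ici 0) 0 := by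
  classical
  have hdA : IsUnit (covX P).det := isUnit_iff_ne_zero.mpr hX.det_pos.ne'
  have hdC : IsUnit (covY P).det := isUnit_iff_ne_zero.mpr hY.det_pos.ne'
  set A := covX P with hA
  set B := covXY P with hB
  set C := covY P with hC
  set u : Fin p → ℝ := fun i => o.1 i - meanX P i with hu
  set v : Fin q → ℝ := fun j => o.2 j - meanY P j with hv
  set α : ℝ := u ⬝ᵥ A⁻¹.mulVec u with hαdef
  set β : ℝ := v ⬝ᵥ C⁻¹.mulVec v with hβdef
  have hα0 : 0 ≤ α := by
    have h := hX.inv.posSemidef.dotProduct_mulVec_nonneg u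
    simpa [hαdef] using h
  have hβ0 : 0 ≤ β := by
    have h := hY.inv.posSemidef.dotProduct_mulVec_nonneg v
    simpa [hβdef] using h
  -- continuity and bounds for coordinate functions
  have hcX : ∀ i : Fin p, Continuous (fun w : (Fin p → ℝ) × (Fin q → ℝ) => w.1 i) :=
    fun i => (continuous_apply i).comp continuous_fst
  have hcY : ∀ j : Fin q, Continuous (fun w : (Fin p → ℝ) × (Fin q → ℝ) => w.2 j) :=
    fun j => (continuous_apply j).comp continuous_snd
  have hbX : ∀ i : Fin p, ∀ w : (Fin p → ℝ) × (Fin q → ℝ), |w.1 i| ≤ max ‖w.1‖ ‖w.2‖ :=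
    fun i w => by
      simpa [Real.norm_eq_abs] using (norm_le_pi_norm w.1 i).trans (le_max_left ‖w.1‖ ‖w.2‖)
  have hbY : ∀ j : Fin q, ∀ w : (Fin p → ℝ) × (Fin q → ℝ), |w.2 j| ≤ max ‖w.1‖ ‖w.2‖ :=
    fun j w => by
      simpa [Real.norm_eq_abs] using (norm_le_pi_norm w.2 j).trans (le_max_right ‖w.1‖ ‖w.2‖)
  -- covariance matrices of the perturbed measure
  have hcovX : ∀ ε : ℝ, 0 ≤ ε → ε ≤ 1 → covX (pert P o ε)
      = (1 - ε) • A + (ε * (1 - ε)) • vecMulVec u u := by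
    intro ε h0 h1
    ext i i'
    have h := RPCG.cov_pert_entry hX2 hY2 o h0 h1 (fun w => w.1 i) (fun w => w.1 i')
      (hcX i) (hcX i') (hbX i) (hbX i')
    simp only [Matrix.add_apply, Matrix.smul_apply, Matrix.vecMulVec_apply, smul_eq_mul]
    exact h
  have hcovY : ∀ ε : ℝ, 0 ≤ ε → ε ≤ 1 → covY (pert P o ε)
      = (1 - ε) • C + (ε * (1 - ε)) • vecMulVec v v := by
    intro ε h0 h1
    ext j j'
    have h := RPCG.cov_pert_entry hX2 hY2 o h0 h1 (fun w => w.2 j) (fun w => w.2 j')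
      (hcY j) (hcY j') (hbY j) (hbY j')
    simp only [Matrix.add_apply, Matrix.smul_apply, Matrix.vecMulVec_apply, smul_eq_mul]
    exact h
  have hcovXY : ∀ ε : ℝ, 0 ≤ ε → ε ≤ 1 → covXY (pert P o ε)
      = (1 - ε) • B + (ε * (1 - ε)) • vecMulVec u v := by
    intro ε h0 h1
    ext i j
    have h := RPCG.cov_pert_entry hX2 hY2 o h0 h1 (fun w => w.1 i) (fun w => w.2 j)
      (hcX i) (hcY j) (hbX i) (hbY j)
    simp only [Matrix.add_apply, Matrix.smul_apply, Matrix.vecMulVec_apply, smul_eq_mul]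
    exact h
  -- the Sherman--Morrison curves
  set SA : ℝ → Matrix (Fin p) (Fin p) ℝ :=
    fun ε => A⁻¹ - (ε / (1 + ε * α)) • (A⁻¹ * vecMulVec u u * A⁻¹) with hSAdef
  set SC : ℝ → Matrix (Fin q) (Fin q) ℝ :=
    fun ε => C⁻¹ - (ε / (1 + ε * β)) • (C⁻¹ * vecMulVec v v * C⁻¹) with hSCdef
  set MB : ℝ → Matrix (Fin p) (Fin q) ℝ := fun ε => B + ε • vecMulVec u v with hMBdef
  set g : ℝ → ℝ := fun ε => Matrix.trace (SA ε * MB ε * SC ε * (MB ε)ᵀ) with hgdef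
  -- inverses of perturbed covariances
  have hpil : ∀ ε : ℝ, 0 ≤ ε → ε ≤ 1/2 → pillai (pert P o ε) = g ε := by
    intro ε h0 h12
    have h1 : ε ≤ 1 := by linarith
    have hne : (1 - ε) ≠ 0 := by linarith
    have hdenA : 1 + ε * α ≠ 0 := by positivity
    have hdenC : 1 + ε * β ≠ 0 := by positivity
    have hsplitX : (1 - ε) • A + (ε * (1 - ε)) • vecMulVec u u
        = (1 - ε) • (A + ε • vecMulVec u u) := by
      rw [smul_add, smul_smul, mul_comm]
    have hsplitY : (1 - ε) • C + (ε * (1 - ε)) • vecMulVec v v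
        = (1 - ε) • (C + ε • vecMulVec v v) := by
      rw [smul_add, smul_smul, mul_comm]
    have hsplitXY : (1 - ε) • B + (ε * (1 - ε)) • vecMulVec u v = (1 - ε) • MB ε := by
      rw [hMBdef, smul_add, smul_smul, mul_comm]
    have hinvX : (covX (pert P o ε))⁻¹ = (1 - ε)⁻¹ • SA ε := by
      rw [hcovX ε h0 h1, hsplitX]
      apply Matrix.inv_eq_right_inv
      have key := RPCG.sm_right_inv A hdA u u hdenA
      rw [Matrix.smul_mul, Matrix.mul_smul, smul_smul, key, mul_inv_cancel₀ hne, one_smul]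
    have hinvY : (covY (pert P o ε))⁻¹ = (1 - ε)⁻¹ • SC ε := by
      rw [hcovY ε h0 h1, hsplitY]
      apply Matrix.inv_eq_right_inv
      have key := RPCG.sm_right_inv C hdC v v hdenC
      rw [Matrix.smul_mul, Matrix.mul_smul, smul_smul, key, mul_inv_cancel₀ hne, one_smul]
    show Matrix.trace ((covX (pert P o ε))⁻¹ * covXY (pert P o ε) * (covY (pert P o ε))⁻¹
      * (covXY (pert P o ε))ᵀ) = g ε
    rw [hinvX, hinvY, hcovXY ε h0 h1, hsplitXY]
    simp only [Matrix.transpose_smul, Matrix.smul_mul, Matrix.mul_smul, smul_smul,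
      Matrix.trace_smul, smul_eq_mul, hgdef]
    field_simp
  -- entrywise derivatives at 0
  set K : Matrix (Fin p) (Fin p) ℝ := A⁻¹ * vecMulVec u u * A⁻¹ with hKdef
  set L : Matrix (Fin q) (Fin q) ℝ := C⁻¹ * vecMulVec v v * C⁻¹ with hLdef
  have hquot : ∀ γ : ℝ, HasDerivAt (fun ε : ℝ => ε / (1 + ε * γ)) 1 0 := by
    intro γ
    have hd : HasDerivAt (fun ε : ℝ => 1 + ε * γ) γ 0 := by
      simpa using ((hasDerivAt_id (0:ℝ)).mul_const γ).const_add 1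
    have h := (hasDerivAt_id (0:ℝ)).div hd (by norm_num)
    refine h.congr_deriv ?_
    simp
  have hSA' : ∀ i j, HasDerivAt (fun ε => SA ε i j) ((-K) i j) 0 := by
    intro i j
    have h := ((hquot α).mul_const (K i j)).const_sub (A⁻¹ i j)
    refine h.congr_deriv ?_
    simp [Matrix.neg_apply]
  have hSC' : ∀ i j, HasDerivAt (fun ε => SC ε i j) ((-L) i j) 0 := by
    intro i j
    have h := ((hquot β).mul_const (L i j)).const_sub (C⁻¹ i j)
    refine h.congr_deriv ?_
    simp [Matrix.neg_apply]
  have hMB' : ∀ i j, HasDerivAt (fun ε => MB ε i j) ((vecMulVec u v) i j) 0 := by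
    intro i j
    have h := ((hasDerivAt_id (0:ℝ)).mul_const ((vecMulVec u v) i j)).const_add (B i j)
    refine h.congr_deriv ?_
    simp
  have hMBT' : ∀ i j, HasDerivAt (fun ε => (MB ε)ᵀ i j) ((vecMulVec u v)ᵀ i j) 0 := by
    intro i j
    simpa [Matrix.transpose_apply] using hMB' j i
  have hSA0 : SA 0 = A⁻¹ := by simp [hSAdef]
  have hSC0 : SC 0 = C⁻¹ := by simp [hSCdef]
  have hMB0 : MB 0 = B := by simp [hMBdef]
  have hgd : HasDerivAt g
      (Matrix.trace ((-K) * B * C⁻¹ * Bᵀ) + Matrix.trace (A⁻¹ * vecMulVec u v * C⁻¹ * Bᵀ)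
        + Matrix.trace (A⁻¹ * B * (-L) * Bᵀ)
        + Matrix.trace (A⁻¹ * B * C⁻¹ * (vecMulVec u v)ᵀ)) 0 := by
    have h := RPCG.hasDerivAt_trace_mul4 hSA' hMB' hSC' hMBT'
    rw [hSA0, hSC0, hMB0] at h
    exact h
  -- trace computations
  have hAsym : (A⁻¹)ᵀ = A⁻¹ := by
    have h := hX.inv.isHermitian
    simpa [Matrix.IsHermitian, Matrix.conjTranspose_eq_transpose_of_trivial] using h
  have hCsym : (C⁻¹)ᵀ = C⁻¹ := by
    have h := hY.inv.isHermitian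
    simpa [Matrix.IsHermitian, Matrix.conjTranspose_eq_transpose_of_trivial] using h
  have t1 : Matrix.trace (K * B * C⁻¹ * Bᵀ)
      = u ⬝ᵥ (A⁻¹ * B * C⁻¹ * Bᵀ * A⁻¹).mulVec u := by
    have e : K * B * C⁻¹ * Bᵀ = A⁻¹ * (vecMulVec u u * (A⁻¹ * (B * (C⁻¹ * Bᵀ)))) := by
      simp only [hKdef, Matrix.mul_assoc]
    rw [e, Matrix.trace_mul_comm]
    have e2 : vecMulVec u u * (A⁻¹ * (B * (C⁻¹ * Bᵀ))) * A⁻¹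
        = vecMulVec u u * (A⁻¹ * (B * (C⁻¹ * (Bᵀ * A⁻¹)))) := by
      simp only [Matrix.mul_assoc]
    rw [e2, RPCG.trace_vecMulVec_mul]
    simp only [Matrix.mul_assoc]
  have t2 : Matrix.trace (A⁻¹ * vecMulVec u v * C⁻¹ * Bᵀ)
      = v ⬝ᵥ (C⁻¹ * Bᵀ * A⁻¹).mulVec u := by
    have e : A⁻¹ * vecMulVec u v * C⁻¹ * Bᵀ = A⁻¹ * (vecMulVec u v * (C⁻¹ * Bᵀ)) := by
      simp only [Matrix.mul_assoc]
    rw [e, Matrix.trace_mul_comm]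
    have e2 : vecMulVec u v * (C⁻¹ * Bᵀ) * A⁻¹ = vecMulVec u v * (C⁻¹ * (Bᵀ * A⁻¹)) := by
      simp only [Matrix.mul_assoc]
    rw [e2, RPCG.trace_vecMulVec_mul]
    simp only [Matrix.mul_assoc]
  have t3 : Matrix.trace (A⁻¹ * B * L * Bᵀ)
      = v ⬝ᵥ (C⁻¹ * Bᵀ * A⁻¹ * B * C⁻¹).mulVec v := by
    have e : A⁻¹ * B * L * Bᵀ = (A⁻¹ * (B * C⁻¹)) * (vecMulVec v v * (C⁻¹ * Bᵀ)) := by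
      simp only [hLdef, Matrix.mul_assoc]
    rw [e, Matrix.trace_mul_comm]
    have e2 : vecMulVec v v * (C⁻¹ * Bᵀ) * (A⁻¹ * (B * C⁻¹))
        = vecMulVec v v * (C⁻¹ * (Bᵀ * (A⁻¹ * (B * C⁻¹)))) := by
      simp only [Matrix.mul_assoc]
    rw [e2, RPCG.trace_vecMulVec_mul]
    simp only [Matrix.mul_assoc]
  have t4 : Matrix.trace (A⁻¹ * B * C⁻¹ * (vecMulVec u v)ᵀ)
      = v ⬝ᵥ (C⁻¹ * Bᵀ * A⁻¹).mulVec u := by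
    have e : A⁻¹ * B * C⁻¹ * (vecMulVec u v)ᵀ
        = (A⁻¹ * (B * C⁻¹)) * vecMulVec v u := by
      rw [RPCG.vecMulVec_transpose]
      simp only [Matrix.mul_assoc]
    rw [e, Matrix.trace_mul_comm, RPCG.trace_vecMulVec_mul, RPCG.dot_mulVec_symm]
    have e2 : (A⁻¹ * (B * C⁻¹))ᵀ = C⁻¹ * Bᵀ * A⁻¹ := by
      rw [Matrix.transpose_mul, Matrix.transpose_mul, hAsym, hCsym, Matrix.mul_assoc]
    rw [e2]
  have hD : Matrix.trace ((-K) * B * C⁻¹ * Bᵀ) + Matrix.trace (A⁻¹ * vecMulVec u v * C⁻¹ * Bᵀ)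
        + Matrix.trace (A⁻¹ * B * (-L) * Bᵀ)
        + Matrix.trace (A⁻¹ * B * C⁻¹ * (vecMulVec u v)ᵀ)
      = -(u ⬝ᵥ (A⁻¹ * B * C⁻¹ * Bᵀ * A⁻¹).mulVec u)
        - (v ⬝ᵥ (C⁻¹ * Bᵀ * A⁻¹ * B * C⁻¹).mulVec v)
        + 2 * (v ⬝ᵥ (C⁻¹ * Bᵀ * A⁻¹).mulVec u) := by
    have hn1 : Matrix.trace ((-K) * B * C⁻¹ * Bᵀ) = -Matrix.trace (K * B * C⁻¹ * Bᵀ) := by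
      simp [Matrix.neg_mul, Matrix.trace_neg]
    have hn3 : Matrix.trace (A⁻¹ * B * (-L) * Bᵀ) = -Matrix.trace (A⁻¹ * B * L * Bᵀ) := by
      simp [Matrix.neg_mul, Matrix.mul_neg, Matrix.trace_neg]
    rw [hn1, hn3, t1, t2, t3, t4]
    ring
  have hg0 : g 0 = pillai P := by
    show Matrix.trace (SA 0 * MB 0 * SC 0 * (MB 0)ᵀ) = pillai P
    rw [hSA0, hSC0, hMB0]
    rfl
  have hne0 : g 0 ≠ 0 := by rw [hg0]; exact hΦ.ne'
  have hsq : HasDerivAt (fun ε => Real.sqrt (g ε))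
      ((2 * Real.sqrt (pillai P))⁻¹ *
        (-(u ⬝ᵥ (A⁻¹ * B * C⁻¹ * Bᵀ * A⁻¹).mulVec u)
          - (v ⬝ᵥ (C⁻¹ * Bᵀ * A⁻¹ * B * C⁻¹).mulVec v)
          + 2 * (v ⬝ᵥ (C⁻¹ * Bᵀ * A⁻¹).mulVec u))) 0 := by
    have h := (Real.hasDerivAt_sqrt hne0).comp 0 hgd
    refine h.congr_deriv ?_
    rw [hg0, hD, one_div]
  have heq : (fun ε => Real.sqrt (pillai (pert P o ε)))
      =ᶠ[nhdsWithin 0 (Set.Ici 0)] (fun ε => Real.sqrt (g ε)) := by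
    filter_upwards [nhdsWithin_le_nhds (Iio_mem_nhds (by norm_num : (0:ℝ) < 1/2)),
      self_mem_nhdsWithin] with ε h2 h1
    rw [hpil ε h1 h2.le]
  have hx0 : Real.sqrt (pillai (pert P o 0)) = Real.sqrt (g 0) := by
    rw [hpil 0 le_rfl (by norm_num)]
  exact (hsq.hasDerivWithinAt).congr_of_eventuallyEq heq hx0
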